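/- For every n ≥ 1 there exist a constant c > 0 and a continuous injective map h : [0,1]^n → ℝ^{n+1} such that c·‖x − y‖ ≤ ‖h(x) − h(y)‖ for all x, y ∈ [0,1]^n, and h is differentiable at no point of [0,1]^n. -/

import Mathlib

open MeasureTheory Metric Set Filter
open scoped ENNReal NNReal Topology RealInnerProductSpace

noncomputable section

/-- A unit vector `d` is a limit direction of `A` at `x`: there is a sequence of points of
`A \ {x}` converging to `x` whose normalized directions from `x` converge to `d`. -/
def IsLimitDirection {E : Type*} [NormedAddCommGroup E] [NormedSpace ℝ E]
    (A : Set E) (x d : E) : Prop :=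
  ‖d‖ = 1 ∧ ∃ y : ℕ → E, (∀ k, y k ∈ A ∧ y k ≠ x) ∧
    Tendsto y atTop (𝓝 x) ∧
    Tendsto (fun k => (‖y k - x‖)⁻¹ • (y k - x)) atTop (𝓝 d)

/-- `A` has a tangent line at `x`: the set of limit directions of `A` at `x` is `{v, -v}`
for some unit vector `v`. -/
def HasTangentLineAt {E : Type*} [NormedAddCommGroup E] [NormedSpace ℝ E]
    (A : Set E) (x : E) : Prop :=
  ∃ v : E, ‖v‖ = 1 ∧ {d | IsLimitDirection A x d} = {v, -v}

/-- Lower scaled oscillation of `f` at `x`, where `f` is regarded as a map defined on the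
metric space `A`:  `liminf_{r→0+} (sup_{y ∈ A, dist x y ≤ r} ‖f y - f x‖) / r`. -/
def lOscOn {E F : Type*} [PseudoMetricSpace E] [NormedAddCommGroup F]
    (f : E → F) (A : Set E) (x : E) : ℝ≥0∞ :=
  Filter.liminf
    (fun r : ℝ => (⨆ y ∈ {y ∈ A | dist x y ≤ r}, (‖f y - f x‖₊ : ℝ≥0∞)) / ENNReal.ofReal r)
    (𝓝[>] (0:ℝ))

/-- Upper scaled oscillation of `f` at `x`, where `f` is regarded as a map defined on the
metric space `A`:  `limsup_{r→0+} (sup_{y ∈ A, dist x y ≤ r} ‖f y - f x‖) / r`. -/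
def uOscOn {E F : Type*} [PseudoMetricSpace E] [NormedAddCommGroup F]
    (f : E → F) (A : Set E) (x : E) : ℝ≥0∞ :=
  Filter.limsup
    (fun r : ℝ => (⨆ y ∈ {y ∈ A | dist x y ≤ r}, (‖f y - f x‖₊ : ℝ≥0∞)) / ENNReal.ofReal r)
    (𝓝[>] (0:ℝ))

/-- The closed unit cube `[0,1]^n` in `ℝ^n`. -/
def unitCube (n : ℕ) : Set (EuclideanSpace ℝ (Fin n)) :=
  {x | ∀ i, x i ∈ Set.Icc (0:ℝ) 1}

/-- A set has σ-finite `s`-dimensional Hausdorff measure if it is a countable union of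
sets of finite `H^s` measure. -/
def SigmaFiniteH {E : Type*} [EMetricSpace E] [MeasurableSpace E] [BorelSpace E]
    (s : ℝ) (C : Set E) : Prop :=
  ∃ F : ℕ → Set E, C = ⋃ k, F k ∧ ∀ k, μH[s] (F k) < ⊤

/-- The Hausdorff measure associated to a gauge function `g`. -/
def gaugeHausdorff {E : Type*} [EMetricSpace E] [MeasurableSpace E] [BorelSpace E]
    (g : ℝ → ℝ) : Measure E :=
  Measure.mkMetric (fun d : ℝ≥0∞ => ENNReal.ofReal (g d.toReal))

/-- The hyperplane through `x` with normal vector `θ`. -/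
def hyperplaneThrough {E : Type*} [NormedAddCommGroup E] [InnerProductSpace ℝ E]
    (θ x : E) : Set E := {y | ⟪y - x, θ⟫ = 0}

/-- `x` is an isolated point of `A`. -/
def IsIsolatedIn {E : Type*} [PseudoMetricSpace E] (x : E) (A : Set E) : Prop :=
  x ∈ A ∧ ∃ r > 0, A ∩ Metric.ball x r = {x}

/-- Concatenation of two Euclidean vectors as a point of `ℝ^{n+m}`. -/
def concatPt {n m : ℕ} (x : EuclideanSpace ℝ (Fin n)) (y : EuclideanSpace ℝ (Fin m)) :
    EuclideanSpace ℝ (Fin (n + m)) :=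
  (EuclideanSpace.equiv (Fin (n + m)) ℝ).symm (Fin.append (fun i => x i) (fun j => y j))

/-- A point of `ℝ^{n+1}` given by a vector in `ℝ^n` and a last (vertical) coordinate. -/
def snocPt {n : ℕ} (x : EuclideanSpace ℝ (Fin n)) (t : ℝ) :
    EuclideanSpace ℝ (Fin (n + 1)) :=
  (EuclideanSpace.equiv (Fin (n + 1)) ℝ).symm (Fin.snoc (fun i => x i) t)

/-- For every `n ≥ 1` there exist `c > 0` and a continuous injective map
`h : [0,1]^n → ℝ^{n+1}` with `c ‖x - y‖ ≤ ‖h x - h y‖` for all `x, y ∈ [0,1]^n` which is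
differentiable at no point of `[0,1]^n`. -/
noncomputable def sdist (x : ℝ) : ℝ := min (Int.fract x) (1 - Int.fract x)

lemma sdist_nonneg (x : ℝ) : 0 ≤ sdist x := by
  have h := Int.fract_nonneg x
  have h2 := Int.fract_lt_one x
  unfold sdist
  simp only [le_min_iff]
  constructor <;> linarith

lemma sdist_le_half (x : ℝ) : sdist x ≤ 1/2 := by
  unfold sdist
  rcases le_or_gt (Int.fract x) (1/2) with h | h
  · exact le_trans (min_le_left _ _) h
  · exact le_trans (min_le_right _ _) (by linarith)

lemma sdist_intCast (k : ℤ) : sdist k = 0 := by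
  unfold sdist
  simp [Int.fract_intCast]

lemma sdist_eq_left {m : ℤ} {x : ℝ} (h1 : (m:ℝ) ≤ x) (h2 : x ≤ m + 1/2) :
    sdist x = x - m := by
  have hf : Int.fract x = x - m := by
    rw [Int.fract_eq_iff]
    exact ⟨by linarith, by linarith, m, by ring⟩
  unfold sdist
  rw [hf, min_eq_left (by linarith)]

lemma sdist_eq_right {m : ℤ} {x : ℝ} (h1 : (m:ℝ) + 1/2 ≤ x) (h2 : x ≤ m + 1) :
    sdist x = m + 1 - x := by
  rcases eq_or_lt_of_le h2 with h | h
  · rw [← h]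
    have : x = ((m+1 : ℤ) : ℝ) := by push_cast; linarith
    rw [this, sdist_intCast]; push_cast; ring
  · have hf : Int.fract x = x - m := by
      rw [Int.fract_eq_iff]
      exact ⟨by linarith, by linarith, m, by ring⟩
    unfold sdist
    rw [hf, min_eq_right (by linarith)]
    ring

lemma sdist_exists (x : ℝ) : ∃ k : ℤ, sdist x = |x - k| := by
  rcases le_or_gt (Int.fract x) (1 - Int.fract x) with h | h
  · exact ⟨⌊x⌋, by unfold sdist; rw [min_eq_left h, abs_of_nonneg (by linarith [Int.fract_nonneg x, Int.self_sub_floor x] ) ]; exact (Int.self_sub_floor x).symm ▸ rfl⟩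
  · refine ⟨⌊x⌋ + 1, ?_⟩
    unfold sdist
    rw [min_eq_right h.le]
    have hx : x - ⌊x⌋ = Int.fract x := Int.self_sub_floor x
    rw [abs_of_nonpos (by push_cast; linarith [Int.fract_lt_one x])]
    push_cast; linarith

lemma sdist_le_abs (x : ℝ) (k : ℤ) : sdist x ≤ |x - k| := by
  rcases le_or_gt (k:ℝ) x with h | h
  · rcases le_or_gt (k:ℝ) ⌊x⌋ with h2 | h2
    · -- k ≤ ⌊x⌋ : |x - k| = x - k ≥ x - ⌊x⌋ = fract x ≥ sdist
      have : Int.fract x ≤ |x - k| := by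
        rw [abs_of_nonneg (by linarith)]
        have := Int.self_sub_floor x
        linarith [Int.floor_le x, this ▸ le_refl (x - ⌊x⌋)]
      calc sdist x ≤ Int.fract x := min_le_left _ _
        _ ≤ _ := by
          rw [abs_of_nonneg (by linarith)]
          have h3 : Int.fract x = x - ⌊x⌋ := (Int.self_sub_floor x).symm
          linarith
    ·
      exfalso
      have : (⌊x⌋ : ℝ) + 1 ≤ k := by exact_mod_cast Int.add_one_le_iff.mpr (by exact_mod_cast h2)
      linarith [Int.lt_floor_add_one x]
  · have hk : (⌊x⌋:ℝ) + 1 ≤ k := by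
      exact_mod_cast Int.add_one_le_iff.mpr (Int.floor_lt.mpr h)
    have h3 : Int.fract x = x - ⌊x⌋ := (Int.self_sub_floor x).symm
    calc sdist x ≤ 1 - Int.fract x := min_le_right _ _
      _ ≤ |x - k| := by rw [abs_of_nonpos (by linarith)]; linarith

lemma sdist_lipschitz : LipschitzWith 1 sdist := by
  apply LipschitzWith.of_dist_le_mul
  intro x y
  rw [Real.dist_eq, Real.dist_eq]
  push_cast
  rw [one_mul, abs_le]
  obtain ⟨kx, hkx⟩ := sdist_exists x
  obtain ⟨ky, hky⟩ := sdist_exists y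
  have h3 : |y - x| = |x - y| := abs_sub_comm y x
  constructor
  · have h1 : sdist y ≤ |y - kx| := sdist_le_abs y kx
    have h2 : |y - (kx:ℝ)| ≤ |y - x| + |x - kx| := abs_sub_le y x kx
    rw [← hkx] at h2
    linarith
  · have h1 : sdist x ≤ |x - ky| := sdist_le_abs x ky
    have h2 : |x - (ky:ℝ)| ≤ |x - y| + |y - ky| := abs_sub_le x y ky
    rw [← hky] at h2
    linarith

lemma sdist_continuous : Continuous sdist := sdist_lipschitz.continuous

noncomputable def tak (x : ℝ) : ℝ := ∑' k : ℕ, (2:ℝ)⁻¹^k * sdist (2^k * x)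

lemma tak_term_bound (k : ℕ) (x : ℝ) : ‖(2:ℝ)⁻¹^k * sdist (2^k * x)‖ ≤ (2:ℝ)⁻¹^k := by
  rw [Real.norm_eq_abs, abs_mul, abs_of_nonneg (by positivity), abs_of_nonneg (sdist_nonneg _)]
  have h := sdist_le_half (2^k * x)
  nlinarith [pow_pos (by norm_num : (0:ℝ) < 2⁻¹) k]

lemma geom_summable : Summable (fun k : ℕ => (2:ℝ)⁻¹^k) :=
  summable_geometric_of_lt_one (by norm_num) (by norm_num)

lemma tak_summable (x : ℝ) : Summable fun k : ℕ => (2:ℝ)⁻¹^k * sdist (2^k * x) := by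
  apply Summable.of_norm
  apply Summable.of_nonneg_of_le (fun k => norm_nonneg _) (fun k => tak_term_bound k x) geom_summable

lemma tak_continuous : Continuous tak := by
  apply continuous_tsum (u := fun k : ℕ => (2:ℝ)⁻¹^k)
  · intro k
    exact (continuous_const.mul (sdist_continuous.comp (continuous_const.mul continuous_id)))
  · exact geom_summable
  · intro k x; exact tak_term_bound k x

lemma sdist_mid (p : ℕ) (hp : 1 ≤ p) (j : ℤ) :
    sdist ((2*j+1)/2^(p+1)) = (sdist (j/2^p) + sdist ((j+1)/2^p))/2 := by
  obtain ⟨p', rfl⟩ : ∃ p', p = p' + 1 := ⟨p-1, (Nat.succ_pred_eq_of_pos hp).symm⟩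
  set q : ℤ := 2^p' with hq
  have hq0 : (0:ℤ) < q := by positivity
  set l : ℤ := j / q with hl
  have hmod := Int.mul_ediv_add_emod j q
  have hr0 : 0 ≤ j % q := Int.emod_nonneg j (ne_of_gt hq0)
  have hr1 : j % q < q := Int.emod_lt_of_pos j hq0
  have hjl : l * q ≤ j := by nlinarith
  have hjl2 : j + 1 ≤ (l+1) * q := by nlinarith
  have hjlR : (l:ℝ) * q ≤ (j:ℝ) := by exact_mod_cast hjl
  have hjl2R : (j:ℝ) + 1 ≤ ((l:ℝ)+1) * q := by exact_mod_cast hjl2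
  have hqR : ((q:ℤ):ℝ) = 2^p' := by rw [hq]; push_cast; ring
  set P : ℝ := 2^(p'+1) with hPdef
  have hP : P = 2 * (q:ℝ) := by rw [hqR]; ring
  have hP0 : (0:ℝ) < P := by positivity
  set A : ℝ := (j:ℝ)/P with hA
  set B : ℝ := ((j:ℝ)+1)/P with hB
  have hgoalpts : (2*(j:ℝ)+1)/2^(p'+1+1) = (A+B)/2 := by
    rw [hA, hB, hPdef]; field_simp; ring
  have hq0R : (0:ℝ) < (q:ℝ) := by exact_mod_cast hq0
  have hAB : A ≤ B := by
    rw [hA, hB]; gcongr; linarith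
  have hLA : ((l:ℝ))/2 ≤ A := by
    rw [hA, hP, div_le_div_iff₀ (by norm_num) (by positivity)]
    nlinarith
  have hBL : B ≤ ((l:ℝ)+1)/2 := by
    rw [hB, hP, div_le_div_iff₀ (by positivity) (by norm_num)]
    nlinarith
  rw [hgoalpts]
  rcases Int.even_or_odd l with ⟨t, ht⟩ | ⟨t, ht⟩
  · have htR : (l:ℝ) = 2*(t:ℝ) := by rw [ht]; push_cast; ring
    rw [htR] at hLA hBL
    have e1 : sdist A = A - t := sdist_eq_left (by linarith) (by linarith)
    have e2 : sdist B = B - t := sdist_eq_left (by linarith) (by linarith)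
    have e3 : sdist ((A+B)/2) = (A+B)/2 - t := sdist_eq_left (by linarith) (by linarith)
    rw [e1, e2, e3]; ring
  · have htR : (l:ℝ) = 2*(t:ℝ)+1 := by rw [ht]; push_cast; ring
    rw [htR] at hLA hBL
    have e1 : sdist A = (t:ℝ) + 1 - A := sdist_eq_right (by linarith) (by linarith)
    have e2 : sdist B = (t:ℝ) + 1 - B := sdist_eq_right (by linarith) (by linarith)
    have e3 : sdist ((A+B)/2) = (t:ℝ) + 1 - (A+B)/2 := sdist_eq_right (by linarith) (by linarith)
    rw [e1, e2, e3]; ring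

lemma tak_mid (m : ℕ) (j : ℤ) :
    tak ((2*(j:ℝ)+1)/2^(m+1))
      = (tak ((j:ℝ)/2^m) + tak (((j:ℝ)+1)/2^m))/2 + (2:ℝ)⁻¹^(m+1) := by
  set u : ℝ := (j:ℝ)/2^m with hu
  set v : ℝ := ((j:ℝ)+1)/2^m with hv
  set w : ℝ := (2*(j:ℝ)+1)/2^(m+1) with hw
  have hE : ∀ k : ℕ, (2:ℝ)⁻¹^k * sdist (2^k * w)
      - ((2:ℝ)⁻¹^k * sdist (2^k * u) + (2:ℝ)⁻¹^k * sdist (2^k * v))/2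
      = if k = m then (2:ℝ)⁻¹^(m+1) else 0 := by
    intro k
    rcases lt_trichotomy k m with hk | rfl | hk
    · obtain ⟨p, hp, rfl⟩ : ∃ p, 1 ≤ p ∧ m = k + p := ⟨m - k, by omega, by omega⟩
      rw [if_neg (by omega)]
      have e1 : (2:ℝ)^k * u = (j:ℝ)/2^p := by
        rw [hu, pow_add]; field_simp
      have e2 : (2:ℝ)^k * v = ((j:ℝ)+1)/2^p := by
        rw [hv, pow_add]; field_simp
      have e3 : (2:ℝ)^k * w = (2*(j:ℝ)+1)/2^(p+1) := by
        rw [hw, show k+p+1 = k+(p+1) by ring, pow_add]; field_simp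
      rw [e1, e2, e3, sdist_mid p hp j]; ring
    · rw [if_pos rfl]
      have e1 : (2:ℝ)^k * u = ((j:ℤ):ℝ) := by
        rw [hu]; field_simp
      have e2 : (2:ℝ)^k * v = (((j+1:ℤ)):ℝ) := by
        rw [hv]; push_cast; field_simp
      have e3 : (2:ℝ)^k * w = (j:ℝ) + 1/2 := by
        rw [hw, pow_succ]; field_simp
      have s3 : sdist ((j:ℝ) + 1/2) = 1/2 := by
        rw [sdist_eq_left (m := j) (by linarith) (by linarith)]; ring
      rw [e1, e2, e3, sdist_intCast, sdist_intCast, s3, pow_succ]; ring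
    · obtain ⟨d, rfl⟩ : ∃ d, k = m + 1 + d := ⟨k - (m+1), by omega⟩
      rw [if_neg (by omega)]
      have e1 : (2:ℝ)^(m+1+d) * u = ((j * 2^(d+1) : ℤ):ℝ) := by
        rw [hu]; push_cast; rw [pow_add, pow_add]; field_simp; ring
      have e2 : (2:ℝ)^(m+1+d) * v = (((j+1) * 2^(d+1) : ℤ):ℝ) := by
        rw [hv]; push_cast; rw [pow_add, pow_add]; field_simp; ring
      have e3 : (2:ℝ)^(m+1+d) * w = (((2*j+1) * 2^d : ℤ):ℝ) := by
        rw [hw]; push_cast; rw [show m+1+d = (m+1)+d by ring, pow_add]; field_simp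
      rw [e1, e2, e3, sdist_intCast, sdist_intCast, sdist_intCast]; ring
  have hsu := tak_summable u
  have hsv := tak_summable v
  have hsw := tak_summable w
  have hsum : ∑' k : ℕ, ((2:ℝ)⁻¹^k * sdist (2^k * w)
      - ((2:ℝ)⁻¹^k * sdist (2^k * u) + (2:ℝ)⁻¹^k * sdist (2^k * v))/2)
      = (2:ℝ)⁻¹^(m+1) := by
    rw [funext hE]
    exact tsum_ite_eq m (fun _ => (2:ℝ)⁻¹^(m+1))
  have hsplit : ∑' k : ℕ, ((2:ℝ)⁻¹^k * sdist (2^k * w)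
      - ((2:ℝ)⁻¹^k * sdist (2^k * u) + (2:ℝ)⁻¹^k * sdist (2^k * v))/2)
      = tak w - (tak u + tak v)/2 := by
    rw [Summable.tsum_sub hsw (Summable.div_const (hsu.add hsv) 2)]
    unfold tak
    congr 1
    rw [tsum_div_const, Summable.tsum_add hsu hsv]
  rw [hsplit] at hsum
  linarith

lemma straddle {f : ℝ → ℝ} {s : Set ℝ} {x L : ℝ} (hf : HasDerivWithinAt f L s x)
    {u v : ℕ → ℝ} (hu : ∀ m, u m ∈ s) (hv : ∀ m, v m ∈ s)
    (h1 : ∀ m, u m ≤ x) (h2 : ∀ m, x ≤ v m) (h3 : ∀ m, u m < v m)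
    (h4 : Tendsto (fun m => v m - u m) atTop (𝓝 0)) :
    Tendsto (fun m => (f (v m) - f (u m)) / (v m - u m)) atTop (𝓝 L) := by
  rw [Metric.tendsto_atTop]
  intro ε hε
  have hO := (hasDerivWithinAt_iff_isLittleO.mp hf).def (half_pos hε)
  rw [eventually_nhdsWithin_iff, Metric.eventually_nhds_iff] at hO
  obtain ⟨δ, hδ, hball⟩ := hO
  obtain ⟨N, hN⟩ := (Metric.tendsto_atTop.mp h4) δ hδ
  refine ⟨N, fun m hm => ?_⟩
  have hvu : 0 < v m - u m := by linarith [h3 m]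
  have hd : v m - u m < δ := by
    have := hN m hm
    rw [Real.dist_eq, sub_zero, abs_of_pos hvu] at this
    exact this
  have hvs : dist (v m) x < δ := by
    rw [Real.dist_eq, abs_of_nonneg (by linarith [h2 m])]; linarith [h1 m]
  have hus : dist (u m) x < δ := by
    rw [Real.dist_eq, abs_of_nonpos (by linarith [h1 m])]; linarith [h2 m]
  have Bv := hball hvs (hv m)
  have Bu := hball hus (hu m)
  simp only [Real.norm_eq_abs, smul_eq_mul] at Bv Bu
  have havx : |v m - x| = v m - x := abs_of_nonneg (by linarith [h2 m])
  have haux : |u m - x| = -(u m - x) := abs_of_nonpos (by linarith [h1 m])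
  rw [havx] at Bv
  rw [haux] at Bu
  have key : |f (v m) - f (u m) - (v m - u m) * L| ≤ ε/2 * (v m - u m) := by
    have htri : |(f (v m) - f x - (v m - x) * L) - (f (u m) - f x - (u m - x) * L)|
        ≤ |f (v m) - f x - (v m - x) * L| + |f (u m) - f x - (u m - x) * L| := abs_sub _ _
    have heq : (f (v m) - f x - (v m - x) * L) - (f (u m) - f x - (u m - x) * L)
        = f (v m) - f (u m) - (v m - u m) * L := by ring
    rw [heq] at htri
    linarith
  have heq2 : (f (v m) - f (u m))/(v m - u m) - L
      = (f (v m) - f (u m) - (v m - u m)*L)/(v m - u m) := by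
    field_simp
  rw [Real.dist_eq, heq2, abs_div, abs_of_pos hvu]
  have hle : |f (v m) - f (u m) - (v m - u m) * L| / (v m - u m) ≤ ε/2 := by
    rw [div_le_iff₀ hvu]; linarith
  linarith

lemma floor_double (y : ℝ) : ⌊2*y⌋ = 2*⌊y⌋ ∨ ⌊2*y⌋ = 2*⌊y⌋+1 := by
  have h1 : 2*⌊y⌋ ≤ ⌊2*y⌋ := Int.le_floor.mpr (by push_cast; linarith [Int.floor_le y])
  have h2 : ⌊2*y⌋ < 2*⌊y⌋ + 2 := Int.floor_lt.mpr (by push_cast; linarith [Int.lt_floor_add_one y])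
  omega

lemma tak_not_diff {x : ℝ} (hx : x ∈ Icc (0:ℝ) 1) :
    ¬ DifferentiableWithinAt ℝ tak (Icc (0:ℝ) 1) x := by
  intro hd
  obtain ⟨hx0, hx1⟩ := hx
  have hL := hd.hasDerivWithinAt
  set L := derivWithin tak (Icc (0:ℝ) 1) x with hLdef
  set j : ℕ → ℤ := fun m => min ⌊2^m * x⌋ ((2:ℤ)^m - 1) with hj
  set u : ℕ → ℝ := fun m => (j m : ℝ)/2^m with hudef
  set v : ℕ → ℝ := fun m => ((j m : ℝ)+1)/2^m with hvdef
  have hpow : ∀ m : ℕ, (0:ℝ) < 2^m := fun m => by positivity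
  have hintpow : ∀ m : ℕ, (1:ℤ) ≤ 2^m := fun m => by
    have h : (0:ℤ) < 2^m := by positivity
    linarith [Int.lt_iff_add_one_le.mp h]
  have hj0 : ∀ m, 0 ≤ j m := by
    intro m
    refine le_min (Int.le_floor.mpr ?_) (by have := hintpow m; omega)
    push_cast
    positivity
  have hjfloor : ∀ m, j m ≤ ⌊2^m * x⌋ := fun m => min_le_left _ _
  have hjtop : ∀ m, j m ≤ 2^m - 1 := fun m => min_le_right _ _
  have hjtopR : ∀ m, (j m : ℝ) ≤ 2^m - 1 := by
    intro m
    have := hjtop m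
    have h2 : ((j m : ℤ):ℝ) ≤ (((2:ℤ)^m - 1 : ℤ):ℝ) := by exact_mod_cast this
    push_cast at h2
    linarith
  have hux : ∀ m, u m ≤ x := by
    intro m
    rw [hudef, div_le_iff₀ (hpow m)]
    calc (j m : ℝ) ≤ (⌊2^m * x⌋ : ℝ) := by exact_mod_cast hjfloor m
      _ ≤ 2^m * x := Int.floor_le _
      _ = x * 2^m := by ring
  have hxv : ∀ m, x ≤ v m := by
    intro m
    rw [hvdef, le_div_iff₀ (hpow m)]
    rcases le_or_gt ⌊2^m * x⌋ ((2:ℤ)^m - 1) with h | h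
    · have hjm : j m = ⌊2^m * x⌋ := min_eq_left h
      rw [hjm]
      have := Int.lt_floor_add_one (2^m * x)
      linarith
    · have hjm : j m = (2:ℤ)^m - 1 := min_eq_right (by omega)
      rw [hjm]
      have h2 : x * 2^m ≤ 2^m := by nlinarith [hpow m]
      push_cast
      linarith
  have huv : ∀ m, u m < v m := by
    intro m
    rw [hudef, hvdef, div_lt_div_iff₀ (hpow m) (hpow m)]
    nlinarith [hpow m]
  have hu01 : ∀ m, u m ∈ Icc (0:ℝ) 1 := by
    intro m
    constructor
    · apply div_nonneg _ (hpow m).le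
      exact_mod_cast hj0 m
    · rw [hudef, div_le_one (hpow m)]
      linarith [hjtopR m]
  have hv01 : ∀ m, v m ∈ Icc (0:ℝ) 1 := by
    intro m
    constructor
    · apply div_nonneg _ (hpow m).le
      have : (0:ℝ) ≤ (j m : ℝ) := by exact_mod_cast hj0 m
      linarith
    · rw [hvdef, div_le_one (hpow m)]
      linarith [hjtopR m]
  have hdiff : ∀ m, v m - u m = 1/2^m := by
    intro m
    rw [hudef, hvdef]
    field_simp
    ring
  have htend : Tendsto (fun m => v m - u m) atTop (𝓝 0) := by
    have hfe : (fun m => v m - u m) = fun m : ℕ => (1/2:ℝ)^m := by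
      funext m
      rw [hdiff m, div_pow, one_pow]
    rw [hfe]
    exact tendsto_pow_atTop_nhds_zero_of_lt_one (by norm_num) (by norm_num)
  set D : ℕ → ℝ := fun m => 2^m * (tak (v m) - tak (u m)) with hD
  have hDq : (fun m => (tak (v m) - tak (u m))/(v m - u m)) = D := by
    funext m
    rw [hdiff m, hD]
    field_simp
  have hDt : Tendsto D atTop (𝓝 L) := by
    rw [← hDq]
    exact straddle hL hu01 hv01 hux hxv huv htend
  have hone : ∀ m : ℕ, (2:ℝ)^(m+1) * (2:ℝ)⁻¹^(m+1) = 1 := by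
    intro m
    rw [← mul_pow]
    norm_num
  have hchild : ∀ m, j (m+1) = 2 * j m ∨ j (m+1) = 2 * j m + 1 := by
    intro m
    rcases le_or_gt ⌊2^m * x⌋ ((2:ℤ)^m - 1) with h | h
    · have hjm : j m = ⌊2^m * x⌋ := min_eq_left h
      have hxlt : x < 1 := by
        by_contra hge
        push_neg at hge
        have hx1' : x = 1 := le_antisymm hx1 hge
        have : ⌊2^m * x⌋ = 2^m := by
          rw [hx1', mul_one, show ((2:ℝ)^m) = (((2:ℤ)^m : ℤ):ℝ) by push_cast; ring,
            Int.floor_intCast]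
        omega
      have hlt : ⌊2^(m+1) * x⌋ ≤ (2:ℤ)^(m+1) - 1 := by
        have : (2:ℝ)^(m+1) * x < 2^(m+1) := by nlinarith [hpow (m+1)]
        have h2 : ⌊2^(m+1) * x⌋ < (2:ℤ)^(m+1) := Int.floor_lt.mpr (by push_cast; linarith)
        omega
      have hjm1 : j (m+1) = ⌊2^(m+1) * x⌋ := min_eq_left hlt
      have hrw : (2:ℝ)^(m+1) * x = 2 * (2^m * x) := by ring
      rw [hjm1, hjm, hrw]
      exact floor_double (2^m * x)
    · have hxe : x = 1 := by
        have h2 : (2:ℤ)^m ≤ ⌊2^m * x⌋ := by omega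
        have h3 : ((2:ℝ)^m) ≤ 2^m * x := by
          have := Int.le_floor.mp h2
          push_cast at this
          linarith
        have : (1:ℝ) ≤ x := by nlinarith [hpow m]
        linarith
      have hfl : ∀ k : ℕ, ⌊2^k * x⌋ = (2:ℤ)^k := by
        intro k
        rw [hxe, mul_one, show ((2:ℝ)^k) = (((2:ℤ)^k : ℤ):ℝ) by push_cast; ring,
          Int.floor_intCast]
      have hjm : j m = (2:ℤ)^m - 1 := by rw [hj]; simp only; rw [hfl m]; omega
      have hjm1 : j (m+1) = (2:ℤ)^(m+1) - 1 := by rw [hj]; simp only; rw [hfl (m+1)]; omega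
      right
      rw [hjm, hjm1, pow_succ]
      ring
  have hstep : ∀ m, |D (m+1) - D m| = 1 := by
    intro m
    have hmid := tak_mid m (j m)
    rcases hchild m with hc | hc
    · have hueq : u (m+1) = u m := by
        rw [hudef]
        simp only
        rw [hc]
        push_cast
        rw [pow_succ]
        field_simp
      have hveq : v (m+1) = (2*((j m):ℝ)+1)/2^(m+1) := by
        rw [hvdef]
        simp only
        rw [hc]
        push_cast
        ring_nf
      have : D (m+1) - D m = 1 := by
        rw [hD]
        simp only
        rw [hueq, hveq, hmid, hudef, hvdef]
        simp only
        have h1 := hone m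
        linear_combination h1
      rw [this]
      norm_num
    · have hueq : u (m+1) = (2*((j m):ℝ)+1)/2^(m+1) := by
        rw [hudef]
        simp only
        rw [hc]
        push_cast
        ring_nf
      have hveq : v (m+1) = v m := by
        rw [hvdef]
        simp only
        rw [hc]
        push_cast
        rw [pow_succ]
        field_simp
        ring
      have : D (m+1) - D m = -1 := by
        rw [hD]
        simp only
        rw [hueq, hveq, hmid, hudef, hvdef]
        simp only
        have h1 := hone m
        linear_combination -h1
      rw [this]
      norm_num
  have hDt' : Tendsto (fun m => D (m+1)) atTop (𝓝 L) :=
    hDt.comp (tendsto_add_atTop_nat 1)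
  have h0 : Tendsto (fun m => |D (m+1) - D m|) atTop (𝓝 0) := by
    have h := hDt'.sub hDt
    rw [sub_self] at h
    have := h.abs
    rwa [abs_zero] at this
  have hfe : (fun m => |D (m+1) - D m|) = fun _ : ℕ => (1:ℝ) := funext hstep
  rw [hfe] at h0
  have := tendsto_nhds_unique h0 tendsto_const_nhds
  norm_num at this

theorem stmt_17 (n : ℕ) (hn : 1 ≤ n) :
    ∃ (c : ℝ) (h : EuclideanSpace ℝ (Fin n) → EuclideanSpace ℝ (Fin (n + 1))),
      0 < c ∧ ContinuousOn h (unitCube n) ∧ Set.InjOn h (unitCube n) ∧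
      (∀ x ∈ unitCube n, ∀ y ∈ unitCube n, c * ‖x - y‖ ≤ ‖h x - h y‖) ∧
      (∀ x ∈ unitCube n, ¬ DifferentiableWithinAt ℝ h (unitCube n) x) := by
  set i0 : Fin n := ⟨0, hn⟩ with hi0
  set h : EuclideanSpace ℝ (Fin n) → EuclideanSpace ℝ (Fin (n+1)) :=
    fun x => snocPt x (tak (x i0)) with hh
  have happ1 : ∀ (x : EuclideanSpace ℝ (Fin n)) (i : Fin n),
      h x i.castSucc = x i := by
    intro x i
    simp [hh, snocPt]
  have happ2 : ∀ (x : EuclideanSpace ℝ (Fin n)), h x (Fin.last n) = tak (x i0) := by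
    intro x
    simp [hh, snocPt]
  have hlow : ∀ x y : EuclideanSpace ℝ (Fin n), ‖x - y‖ ≤ ‖h x - h y‖ := by
    intro x y
    rw [EuclideanSpace.norm_eq, EuclideanSpace.norm_eq]
    apply Real.sqrt_le_sqrt
    have hsub : ∀ i : Fin (n+1), (h x - h y) i = h x i - h y i := fun i => rfl
    have hsub2 : ∀ i : Fin n, (x - y) i = x i - y i := fun i => rfl
    rw [Fin.sum_univ_castSucc]
    have e1 : ∑ i : Fin n, ‖(h x - h y) i.castSucc‖^2 = ∑ i : Fin n, ‖(x - y) i‖^2 := by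
      apply Finset.sum_congr rfl
      intro i _
      rw [hsub i.castSucc, hsub2 i, happ1 x i, happ1 y i]
    rw [e1]
    exact le_add_of_nonneg_right (by positivity)
  have hcont : Continuous h := by
    have : Continuous fun x : EuclideanSpace ℝ (Fin n) =>
        (Fin.snoc (fun i => x i) (tak (x i0)) : Fin (n+1) → ℝ) := by
      apply continuous_pi
      intro i
      refine Fin.lastCases ?_ ?_ i
      · simp only [Fin.snoc_last]
        exact tak_continuous.comp (EuclideanSpace.proj i0).continuous
      · intro j
        simp only [Fin.snoc_castSucc]
        exact (EuclideanSpace.proj j).continuous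
    exact ((EuclideanSpace.equiv (Fin (n+1)) ℝ).symm.continuous).comp this
  refine ⟨1, h, one_pos, hcont.continuousOn, ?_, ?_, ?_⟩
  · intro x _ y _ hxy
    have := hlow x y
    rw [hxy, sub_self, norm_zero] at this
    have h0 : ‖x - y‖ = 0 := le_antisymm this (norm_nonneg _)
    rwa [norm_eq_zero, sub_eq_zero] at h0
  · intro x _ y _
    rw [one_mul]
    exact hlow x y
  · intro x hx hd
    set e : ℝ → EuclideanSpace ℝ (Fin n) :=
      fun t => x + (t - x i0) • EuclideanSpace.single i0 (1:ℝ) with he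
    have heapp : ∀ t i, e t i = if i = i0 then t else x i := by
      intro t i
      have : e t i = x i + (t - x i0) * (EuclideanSpace.single i0 (1:ℝ)) i := rfl
      rw [this, EuclideanSpace.single_apply]
      by_cases hii : i = i0
      · rw [if_pos hii, if_pos hii, hii]; ring
      · rw [if_neg hii, if_neg hii]; ring
    have he0 : e (x i0) = x := by
      ext i
      rw [heapp]
      split_ifs with hii
      · rw [hii]
      · rfl
    have hemaps : MapsTo e (Icc (0:ℝ) 1) (unitCube n) := by
      intro t ht i
      rw [heapp]
      split_ifs
      · exact ht
      · exact hx i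
    have hde : DifferentiableAt ℝ e (x i0) := by
      apply DifferentiableAt.const_add
      exact (differentiableAt_id.sub_const _).smul_const _
    have hg : DifferentiableWithinAt ℝ (h ∘ e) (Icc (0:ℝ) 1) (x i0) := by
      apply DifferentiableWithinAt.comp
      · rw [he0]; exact hd
      · exact hde.differentiableWithinAt
      · exact hemaps
    have hproj : DifferentiableWithinAt ℝ
        (⇑(EuclideanSpace.proj (𝕜 := ℝ) (Fin.last n)) ∘ (h ∘ e)) (Icc (0:ℝ) 1) (x i0) :=
      (EuclideanSpace.proj (Fin.last n)).differentiableAt.comp_differentiableWithinAt _ hg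
    have heq : (⇑(EuclideanSpace.proj (𝕜 := ℝ) (Fin.last n)) ∘ (h ∘ e)) = tak := by
      funext t
      show (h (e t)) (Fin.last n) = tak t
      rw [happ2, heapp]
      simp
    rw [heq] at hproj
    exact tak_not_diff (hx i0) hproj

end
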